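/- For every n×m matrix A over ℂ × ℂ, the idempotent row rank of A equals the idempotent column rank of A; that is, the ℂ-dimension of (span ℂ (rows of ¹A)).map ι₁ ⊔ (span ℂ (rows of ²A)).map ι₂ in (ℂ × ℂ)^m equals the ℂ-dimension of (span ℂ (columns of ¹A)).map ι₁ ⊔ (span ℂ (columns of ²A)).map ι₂ in (ℂ × ℂ)^n. -/

import Mathlib

open Matrix

/-- Multiplication by `e₁ = (1,0)`: the ℂ-linear map `ℂ^k →ₗ[ℂ] (ℂ × ℂ)^k`,
`v ↦ (i ↦ (v i, 0))`. -/
noncomputable def iota1 (k : ℕ) : (Fin k → ℂ) →ₗ[ℂ] (Fin k → ℂ × ℂ) :=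
  LinearMap.pi fun i => (LinearMap.inl ℂ ℂ ℂ).comp (LinearMap.proj i)

/-- Multiplication by `e₂ = (0,1)`: the ℂ-linear map `ℂ^k →ₗ[ℂ] (ℂ × ℂ)^k`,
`v ↦ (i ↦ (0, v i))`. -/
noncomputable def iota2 (k : ℕ) : (Fin k → ℂ) →ₗ[ℂ] (Fin k → ℂ × ℂ) :=
  LinearMap.pi fun i => (LinearMap.inr ℂ ℂ ℂ).comp (LinearMap.proj i)

lemma iota1_inj (k : ℕ) : Function.Injective (iota1 k) := by
  intro x y h
  funext i
  have := congrFun h i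
  simpa [iota1] using congrArg Prod.fst this

lemma iota2_inj (k : ℕ) : Function.Injective (iota2 k) := by
  intro x y h
  funext i
  have := congrFun h i
  simpa [iota2] using congrArg Prod.snd this

lemma finrank_sup_map (k : ℕ) (p q : Submodule ℂ (Fin k → ℂ)) :
    Module.finrank ℂ ↥(p.map (iota1 k) ⊔ q.map (iota2 k)) =
      Module.finrank ℂ ↥p + Module.finrank ℂ ↥q := by
  have hdisj : p.map (iota1 k) ⊓ q.map (iota2 k) = ⊥ := by
    rw [Submodule.eq_bot_iff]
    rintro x ⟨hx1, hx2⟩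
    obtain ⟨v, hv, rfl⟩ := hx1
    obtain ⟨w, hw, hvw⟩ := hx2
    funext i
    have := congrFun hvw i
    simp only [iota1, iota2, LinearMap.pi_apply, LinearMap.comp_apply,
      LinearMap.proj_apply, LinearMap.inl_apply, LinearMap.inr_apply] at this ⊢
    have h1 : v i = 0 := by simpa using congrArg Prod.fst this.symm
    simp [h1]
  have h := Submodule.finrank_sup_add_finrank_inf_eq (p.map (iota1 k)) (q.map (iota2 k))
  rw [hdisj] at h
  simp only [finrank_bot, add_zero] at h
  rw [h, (Submodule.equivMapOfInjective _ (iota1_inj k) p).finrank_eq.symm,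
    (Submodule.equivMapOfInjective _ (iota2_inj k) q).finrank_eq.symm]

theorem idempotent_row_rank_eq_idempotent_column_rank
    {n m : ℕ} (A : Matrix (Fin n) (Fin m) (ℂ × ℂ)) :
    Module.finrank ℂ
      ↥((Submodule.span ℂ (Set.range fun i => (A.map Prod.fst) i)).map (iota1 m) ⊔
        (Submodule.span ℂ (Set.range fun i => (A.map Prod.snd) i)).map (iota2 m)) =
    Module.finrank ℂ
      ↥((Submodule.span ℂ (Set.range fun j => (A.map Prod.fst)ᵀ j)).map (iota1 n) ⊔
        (Submodule.span ℂ (Set.range fun j => (A.map Prod.snd)ᵀ j)).map (iota2 n)) := by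
  rw [finrank_sup_map, finrank_sup_map]
  have h1 : ∀ (B : Matrix (Fin n) (Fin m) ℂ),
      Module.finrank ℂ ↥(Submodule.span ℂ (Set.range fun i => B i)) =
      Module.finrank ℂ ↥(Submodule.span ℂ (Set.range fun j => Bᵀ j)) := by
    intro B
    have := B.rank_eq_finrank_span_row
    have h2 := Bᵀ.rank_eq_finrank_span_row
    rw [B.rank_transpose] at h2
    exact this.symm.trans h2
  rw [h1, h1]
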